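/- Let d ≥ 2 and ν > 0, and let Σ ∈ ℝ^{(d+1)×(d+1)} be the matrix with Σ_{0,0} = α_0, Σ_{0,j} = Σ_{j,0} = Σ_{j,j} = α_1 for 1 ≤ j ≤ d, and Σ_{j,k} = α_2 for 1 ≤ j ≠ k ≤ d. Then Σ is invertible and ‖Σ⁻¹‖_op ≤ 70 · d^{3/2} · exp(5/(2ν²)), where ‖·‖_op is the ℓ²→ℓ² operator norm. -/

import Mathlib

noncomputable section

/-- The LIME weight function ψ_ν(t) = exp(−(1−√(1−t))²/(2ν²)). -/
def psi (ν t : ℝ) : ℝ := Real.exp (-(1 - Real.sqrt (1 - t)) ^ 2 / (2 * ν ^ 2))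

/-- The coefficient α_p(d,ν). -/
def alpha (d : ℕ) (ν : ℝ) (p : ℕ) : ℝ :=
  (1 / (d : ℝ)) * ∑ s ∈ Finset.Icc 1 d,
    (∏ k ∈ Finset.range p, (((d : ℝ) - (s : ℝ) - (k : ℝ)) / ((d : ℝ) - (k : ℝ)))) *
      psi ν ((s : ℝ) / (d : ℝ))

/-- The normalization constant c_d = (d−1)α₀α₂ − dα₁² + α₀α₁. -/
def cConst (d : ℕ) (ν : ℝ) : ℝ :=
  ((d : ℝ) - 1) * alpha d ν 0 * alpha d ν 2 - (d : ℝ) * (alpha d ν 1) ^ 2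
    + alpha d ν 0 * alpha d ν 1

/-- σ₀ = (d−1)α₂ + α₁. -/
def sigma0 (d : ℕ) (ν : ℝ) : ℝ := ((d : ℝ) - 1) * alpha d ν 2 + alpha d ν 1

/-- σ₁ = −α₁. -/
def sigma1 (d : ℕ) (ν : ℝ) : ℝ := -(alpha d ν 1)

/-- σ₂ = ((d−2)α₀α₂ − (d−1)α₁² + α₀α₁)/(α₁−α₂). -/
def sigma2 (d : ℕ) (ν : ℝ) : ℝ :=
  (((d : ℝ) - 2) * alpha d ν 0 * alpha d ν 2 - ((d : ℝ) - 1) * (alpha d ν 1) ^ 2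
      + alpha d ν 0 * alpha d ν 1) / (alpha d ν 1 - alpha d ν 2)

/-- σ₃ = (α₁² − α₀α₂)/(α₁−α₂). -/
def sigma3 (d : ℕ) (ν : ℝ) : ℝ :=
  ((alpha d ν 1) ^ 2 - alpha d ν 0 * alpha d ν 2) / (alpha d ν 1 - alpha d ν 2)

/-- The matrix Σ ∈ ℝ^{(d+1)×(d+1)}: Σ₀₀ = α₀; Σ₀ⱼ = Σⱼ₀ = Σⱼⱼ = α₁ for 1 ≤ j ≤ d;
Σⱼₖ = α₂ for 1 ≤ j ≠ k ≤ d. -/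
def SigmaMat (d : ℕ) (ν : ℝ) : Matrix (Fin (d + 1)) (Fin (d + 1)) ℝ :=
  Matrix.of fun i j =>
    if i = 0 ∧ j = 0 then alpha d ν 0
    else if i = 0 ∨ j = 0 ∨ i = j then alpha d ν 1
    else alpha d ν 2

/-- The ℓ²→ℓ² operator norm of a square real matrix. -/
def opNorm {m : ℕ} (A : Matrix (Fin m) (Fin m) ℝ) : ℝ :=
  ‖Matrix.toEuclideanCLM (𝕜 := ℝ) A‖


lemma sum_Icc_id_real (d : ℕ) : ∑ s ∈ Finset.Icc 1 d, (s:ℝ) = d*(d+1)/2 := by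
  induction d with
  | zero => simp
  | succ n ih =>
    rw [Finset.sum_Icc_succ_top (by omega), ih]
    push_cast; ring

lemma sum_Icc_sq_real (d : ℕ) : ∑ s ∈ Finset.Icc 1 d, (s:ℝ)^2 = d*(d+1)*(2*d+1)/6 := by
  induction d with
  | zero => simp
  | succ n ih =>
    rw [Finset.sum_Icc_succ_top (by omega), ih]
    push_cast; ring

lemma sum_ite_one {n : ℕ} (i : Fin n) (x z : ℝ) :
    ∑ k : Fin n, (if k = i then x else z) = x + ((n:ℝ) - 1) * z := by
  have h : ∀ k : Fin n, (if k = i then x else z) = z + (if k = i then x - z else 0) := by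
    intro k; split_ifs <;> ring
  rw [Finset.sum_congr rfl (fun k _ => h k)]
  rw [Finset.sum_add_distrib, Finset.sum_const, Finset.sum_ite_eq' Finset.univ i (fun _ => x - z)]
  simp [Finset.card_univ]
  ring

lemma sum_ite_two {n : ℕ} (i j : Fin n) (hij : i ≠ j) (x y z : ℝ) :
    ∑ k : Fin n, (if k = i then x else if k = j then y else z) = x + y + ((n:ℝ) - 2) * z := by
  have h : ∀ k : Fin n, (if k = i then x else if k = j then y else z)
      = z + (if k = i then x - z else 0) + (if k = j then y - z else 0) := by
    intro k
    rcases eq_or_ne k i with h1 | h1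
    · subst h1; rw [if_pos rfl, if_pos rfl, if_neg hij]; ring
    · rw [if_neg h1, if_neg h1]
      rcases eq_or_ne k j with h2 | h2
      · subst h2; rw [if_pos rfl, if_pos rfl]; ring
      · rw [if_neg h2, if_neg h2]; ring
  rw [Finset.sum_congr rfl (fun k _ => h k)]
  rw [Finset.sum_add_distrib, Finset.sum_add_distrib, Finset.sum_const,
    Finset.sum_ite_eq' Finset.univ i (fun _ => x - z),
    Finset.sum_ite_eq' Finset.univ j (fun _ => y - z)]
  simp [Finset.card_univ]
  ring


def limeF (d : ℕ) (ν : ℝ) (s : ℕ) : ℝ := psi ν ((s:ℝ)/(d:ℝ))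

lemma limeF_le_one (d : ℕ) (ν : ℝ) (hν : 0 < ν) (s : ℕ) : limeF d ν s ≤ 1 := by
  rw [limeF, psi, Real.exp_le_one_iff]
  apply div_nonpos_of_nonpos_of_nonneg
  · simp [sq_nonneg]
  · positivity

lemma le_limeF (d : ℕ) (ν : ℝ) (hν : 0 < ν) (s : ℕ) (hs : s ∈ Finset.Icc 1 d) :
    Real.exp (-(1/(2*ν^2))) ≤ limeF d ν s := by
  simp only [Finset.mem_Icc] at hs
  have hd : 0 < (d:ℝ) := by
    have : 1 ≤ d := le_trans hs.1 hs.2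
    exact_mod_cast lt_of_lt_of_le Nat.zero_lt_one this
  have ht0 : 0 ≤ (s:ℝ)/(d:ℝ) := by positivity
  have ht1 : (s:ℝ)/(d:ℝ) ≤ 1 := by
    rw [div_le_one hd]; exact_mod_cast hs.2
  rw [limeF, psi, Real.exp_le_exp]
  have h1 : Real.sqrt (1 - (s:ℝ)/(d:ℝ)) ≤ 1 := Real.sqrt_le_one.mpr (by linarith)
  have h0 : 0 ≤ Real.sqrt (1 - (s:ℝ)/(d:ℝ)) := Real.sqrt_nonneg _
  have hsq : (1 - Real.sqrt (1 - (s:ℝ)/(d:ℝ)))^2 ≤ 1 := by nlinarith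
  have h2 : (0:ℝ) < 2*ν^2 := by positivity
  have hdiv : (1 - Real.sqrt (1 - (s:ℝ)/(d:ℝ)))^2 / (2*ν^2) ≤ 1/(2*ν^2) := by gcongr
  rw [neg_div]
  exact neg_le_neg hdiv

lemma limeF_pos (d : ℕ) (ν : ℝ) (s : ℕ) : 0 < limeF d ν s := Real.exp_pos _

lemma alpha_zero (d : ℕ) (ν : ℝ) :
    alpha d ν 0 = (1/(d:ℝ)) * ∑ s ∈ Finset.Icc 1 d, limeF d ν s := by
  simp [alpha, limeF]

lemma alpha_one (d : ℕ) (ν : ℝ) :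
    alpha d ν 1 = (1/(d:ℝ)) * ∑ s ∈ Finset.Icc 1 d,
      (((d:ℝ) - s)/(d:ℝ)) * limeF d ν s := by
  simp [alpha, limeF, Finset.prod_range_one]

lemma alpha_two (d : ℕ) (ν : ℝ) :
    alpha d ν 2 = (1/(d:ℝ)) * ∑ s ∈ Finset.Icc 1 d,
      ((((d:ℝ) - s)/(d:ℝ)) * (((d:ℝ) - s - 1)/((d:ℝ) - 1))) * limeF d ν s := by
  rw [alpha]
  congr 1
  apply Finset.sum_congr rfl
  intro s _
  rw [Finset.prod_range_succ, Finset.prod_range_one, limeF]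
  push_cast
  ring

section reps
variable (d : ℕ) (ν : ℝ)

lemma rep0 : alpha d ν 0 = (∑ s ∈ Finset.Icc 1 d, limeF d ν s) / (d:ℝ) := by
  rw [alpha_zero, one_div, inv_mul_eq_div]

lemma rep1 (hd : 2 ≤ d) :
    alpha d ν 1 = (∑ s ∈ Finset.Icc 1 d, ((d:ℝ) - s) * limeF d ν s) / (d:ℝ)^2 := by
  have hd0 : (d:ℝ) ≠ 0 := Nat.cast_ne_zero.mpr (by omega)
  rw [alpha_one, Finset.mul_sum, Finset.sum_div]
  apply Finset.sum_congr rfl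
  intro s _
  field_simp
  try ring
  try tauto

lemma rep2 (hd : 2 ≤ d) :
    alpha d ν 1 + ((d:ℝ) - 1) * alpha d ν 2
      = (∑ s ∈ Finset.Icc 1 d, ((d:ℝ) - s)^2 * limeF d ν s) / (d:ℝ)^2 := by
  have hd0 : (d:ℝ) ≠ 0 := Nat.cast_ne_zero.mpr (by omega)
  have hd1 : (d:ℝ) - 1 ≠ 0 := by
    have : (2:ℝ) ≤ (d:ℝ) := by exact_mod_cast hd
    linarith
  rw [alpha_one, alpha_two, Finset.mul_sum, Finset.mul_sum, Finset.mul_sum,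
    ← Finset.sum_add_distrib, Finset.sum_div]
  apply Finset.sum_congr rfl
  intro s _
  field_simp
  try ring
  try tauto

lemma repdiff (hd : 2 ≤ d) :
    alpha d ν 1 - alpha d ν 2
      = (∑ s ∈ Finset.Icc 1 d, (s:ℝ) * ((d:ℝ) - s) * limeF d ν s) / ((d:ℝ)^2 * ((d:ℝ) - 1)) := by
  have hd0 : (d:ℝ) ≠ 0 := Nat.cast_ne_zero.mpr (by omega)
  have hd1 : (d:ℝ) - 1 ≠ 0 := by
    have : (2:ℝ) ≤ (d:ℝ) := by exact_mod_cast hd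
    linarith
  rw [alpha_one, alpha_two, Finset.mul_sum, Finset.mul_sum,
    ← Finset.sum_sub_distrib, Finset.sum_div]
  apply Finset.sum_congr rfl
  intro s _
  field_simp
  try ring
  try tauto

end reps

section bounds
variable (d : ℕ) (ν : ℝ)

lemma card_Icc_one (d : ℕ) : (Finset.Icc 1 d).card = d := by
  rw [Nat.card_Icc]; omega

lemma alpha_nonneg (hd : 2 ≤ d) (hν : 0 < ν) (p : ℕ) (hp : p ≤ 2) : 0 ≤ alpha d ν p := by
  have hd0 : (0:ℝ) < (d:ℝ) := by exact_mod_cast (by omega : 0 < d)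
  have hterm : ∀ s ∈ Finset.Icc 1 d, 0 ≤
      (∏ k ∈ Finset.range p, (((d:ℝ) - s - k) / ((d:ℝ) - k))) * psi ν ((s:ℝ)/(d:ℝ)) := by
    intro s hs
    simp only [Finset.mem_Icc] at hs
    have hsd : (s:ℝ) ≤ (d:ℝ) := by exact_mod_cast hs.2
    apply mul_nonneg _ (Real.exp_pos _).le
    interval_cases p
    · simp
    · simp only [Finset.prod_range_one]
      apply div_nonneg (by push_cast; linarith) (by push_cast; linarith)
    · rw [Finset.prod_range_succ, Finset.prod_range_one]
      rcases eq_or_lt_of_le hs.2 with h | h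
      · subst h
        simp
      · have hsd1 : (s:ℝ) ≤ (d:ℝ) - 1 := by
          have : (s:ℝ) + 1 ≤ (d:ℝ) := by exact_mod_cast h
          linarith
        have h2 : (2:ℝ) ≤ (d:ℝ) := by exact_mod_cast hd
        apply mul_nonneg <;> apply div_nonneg <;> push_cast <;> linarith
  rw [alpha]
  exact mul_nonneg (by positivity) (Finset.sum_nonneg hterm)

lemma alpha_le_one (hd : 2 ≤ d) (hν : 0 < ν) (p : ℕ) (hp : p ≤ 2) : alpha d ν p ≤ 1 := by
  have hd0 : (0:ℝ) < (d:ℝ) := by exact_mod_cast (by omega : 0 < d)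
  have hterm : ∀ s ∈ Finset.Icc 1 d,
      (∏ k ∈ Finset.range p, (((d:ℝ) - s - k) / ((d:ℝ) - k))) * psi ν ((s:ℝ)/(d:ℝ)) ≤ 1 := by
    intro s hs
    simp only [Finset.mem_Icc] at hs
    have hs1 : (1:ℝ) ≤ (s:ℝ) := by exact_mod_cast hs.1
    have hsd : (s:ℝ) ≤ (d:ℝ) := by exact_mod_cast hs.2
    have h2 : (2:ℝ) ≤ (d:ℝ) := by exact_mod_cast hd
    have hpsi1 : psi ν ((s:ℝ)/(d:ℝ)) ≤ 1 := limeF_le_one d ν hν s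
    have hpsi0 : 0 ≤ psi ν ((s:ℝ)/(d:ℝ)) := (Real.exp_pos _).le
    have hprod : (∏ k ∈ Finset.range p, (((d:ℝ) - s - k) / ((d:ℝ) - k))) ≤ 1 ∧
        0 ≤ (∏ k ∈ Finset.range p, (((d:ℝ) - s - k) / ((d:ℝ) - k))) := by
      interval_cases p
      · simp
      · simp only [Finset.prod_range_one]
        constructor
        · apply div_le_one_of_le₀ (by push_cast; linarith) (by push_cast; linarith)
        · apply div_nonneg (by push_cast; linarith) (by push_cast; linarith)
      · rw [Finset.prod_range_succ, Finset.prod_range_one]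
        rcases eq_or_lt_of_le hs.2 with h | h
        · subst h; simp
        · have hsd1 : (s:ℝ) ≤ (d:ℝ) - 1 := by
            have : (s:ℝ) + 1 ≤ (d:ℝ) := by exact_mod_cast h
            linarith
          have f1 : ((d:ℝ) - s - 0) / ((d:ℝ) - 0) ≤ 1 :=
            div_le_one_of_le₀ (by linarith) (by linarith)
          have f1' : 0 ≤ ((d:ℝ) - s - 0) / ((d:ℝ) - 0) :=
            div_nonneg (by linarith) (by linarith)
          have f2 : ((d:ℝ) - s - 1) / ((d:ℝ) - 1) ≤ 1 :=
            div_le_one_of_le₀ (by push_cast; linarith) (by linarith)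
          have f2' : 0 ≤ ((d:ℝ) - s - 1) / ((d:ℝ) - 1) :=
            div_nonneg (by push_cast; linarith) (by linarith)
          push_cast
          constructor
          · exact mul_le_one₀ (by push_cast at f1 ⊢; linarith) f2' f2
          · exact mul_nonneg f1' f2'
    calc (∏ k ∈ Finset.range p, (((d:ℝ) - s - k) / ((d:ℝ) - k))) * psi ν ((s:ℝ)/(d:ℝ))
        ≤ 1 * 1 := mul_le_mul hprod.1 hpsi1 hpsi0 (by linarith [hprod.2])
      _ = 1 := by ring
  rw [alpha]
  calc (1/(d:ℝ)) * ∑ s ∈ Finset.Icc 1 d,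
        (∏ k ∈ Finset.range p, (((d:ℝ) - s - k) / ((d:ℝ) - k))) * psi ν ((s:ℝ)/(d:ℝ))
      ≤ (1/(d:ℝ)) * ∑ s ∈ Finset.Icc 1 d, 1 := by
        apply mul_le_mul_of_nonneg_left (Finset.sum_le_sum hterm) (by positivity)
    _ = 1 := by
        rw [Finset.sum_const, card_Icc_one, nsmul_eq_mul]
        field_simp

end bounds

lemma diff_ge (d : ℕ) (ν : ℝ) (hd : 2 ≤ d) (hν : 0 < ν) :
    Real.exp (-(1/(2*ν^2))) / 6 ≤ alpha d ν 1 - alpha d ν 2 := by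
  set m := Real.exp (-(1/(2*ν^2))) with hm
  have hm0 : 0 < m := Real.exp_pos _
  have hd2 : (2:ℝ) ≤ (d:ℝ) := by exact_mod_cast hd
  have hsum : ∑ s ∈ Finset.Icc 1 d, (s:ℝ)*((d:ℝ)-s)
      = (d:ℝ)*((d:ℝ)+1)*((d:ℝ)-1)/6 := by
    have h : ∀ s : ℕ, (s:ℝ)*((d:ℝ)-s) = (d:ℝ)*(s:ℝ) - (s:ℝ)^2 := fun s => by ring
    rw [Finset.sum_congr rfl (fun s _ => h s), Finset.sum_sub_distrib, ← Finset.mul_sum,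
      sum_Icc_id_real, sum_Icc_sq_real]
    ring
  have hT : m * ((d:ℝ)*((d:ℝ)+1)*((d:ℝ)-1)/6)
      ≤ ∑ s ∈ Finset.Icc 1 d, (s:ℝ)*((d:ℝ)-s) * limeF d ν s := by
    rw [← hsum, Finset.mul_sum]
    apply Finset.sum_le_sum
    intro s hs
    simp only [Finset.mem_Icc] at hs
    have hc : 0 ≤ (s:ℝ)*((d:ℝ)-s) := by
      have h1 : (0:ℝ) ≤ (s:ℝ) := by positivity
      have h2 : (s:ℝ) ≤ (d:ℝ) := by exact_mod_cast hs.2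
      nlinarith
    calc m * ((s:ℝ)*((d:ℝ)-s)) = (s:ℝ)*((d:ℝ)-s) * m := by ring
      _ ≤ (s:ℝ)*((d:ℝ)-s) * limeF d ν s := by
          apply mul_le_mul_of_nonneg_left _ hc
          exact le_limeF d ν hν s (by simp only [Finset.mem_Icc]; exact hs)
  rw [repdiff d ν hd]
  rw [div_le_div_iff₀ (by norm_num) (by nlinarith)]
  nlinarith [hT, mul_nonneg (mul_nonneg hm0.le (by linarith : (0:ℝ) ≤ (d:ℝ))) (by linarith : (0:ℝ) ≤ (d:ℝ)-1)]

lemma cConst_rep (d : ℕ) (ν : ℝ) (hd : 2 ≤ d) :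
    cConst d ν = ((∑ s ∈ Finset.Icc 1 d, limeF d ν s)
        * (∑ s ∈ Finset.Icc 1 d, ((d:ℝ) - s)^2 * limeF d ν s)
      - (∑ s ∈ Finset.Icc 1 d, ((d:ℝ) - s) * limeF d ν s)^2) / (d:ℝ)^3 := by
  have hd0 : (d:ℝ) ≠ 0 := Nat.cast_ne_zero.mpr (by omega)
  calc cConst d ν
      = alpha d ν 0 * (alpha d ν 1 + ((d:ℝ)-1)*alpha d ν 2) - (d:ℝ)*(alpha d ν 1)^2 := by
        rw [cConst]; ring
    _ = ((∑ s ∈ Finset.Icc 1 d, limeF d ν s)/(d:ℝ))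
          * ((∑ s ∈ Finset.Icc 1 d, ((d:ℝ) - s)^2 * limeF d ν s)/(d:ℝ)^2)
        - (d:ℝ)*((∑ s ∈ Finset.Icc 1 d, ((d:ℝ) - s) * limeF d ν s)/(d:ℝ)^2)^2 := by
        rw [rep2 d ν hd, rep0, rep1 d ν hd]
    _ = _ := by field_simp

lemma cConst_ge (d : ℕ) (ν : ℝ) (hd : 2 ≤ d) (hν : 0 < ν) :
    Real.exp (-(1/(2*ν^2)))^2 * (d:ℝ) / 16 ≤ cConst d ν := by
  set m := Real.exp (-(1/(2*ν^2))) with hm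
  have hm0 : 0 < m := Real.exp_pos _
  have hd2 : (2:ℝ) ≤ (d:ℝ) := by exact_mod_cast hd
  set S0 := ∑ s ∈ Finset.Icc 1 d, limeF d ν s with hS0
  set S1 := ∑ s ∈ Finset.Icc 1 d, ((d:ℝ) - s) * limeF d ν s with hS1
  set S2 := ∑ s ∈ Finset.Icc 1 d, ((d:ℝ) - s)^2 * limeF d ν s with hS2
  -- variance identity
  have hvar : ∑ s ∈ Finset.Icc 1 d, ∑ t ∈ Finset.Icc 1 d,
      limeF d ν s * limeF d ν t * (((d:ℝ)-s) - ((d:ℝ)-t))^2 = 2*(S0*S2 - S1^2) := by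
    have hexp : ∀ s ∈ Finset.Icc 1 d, ∀ t ∈ Finset.Icc 1 d,
        limeF d ν s * limeF d ν t * (((d:ℝ)-s) - ((d:ℝ)-t))^2
        = limeF d ν s * (((d:ℝ)-t)^2 * limeF d ν t)
          + (((d:ℝ)-s)^2 * limeF d ν s) * limeF d ν t
          - (2*(((d:ℝ)-s) * limeF d ν s)) * (((d:ℝ)-t) * limeF d ν t) := by
      intro s _ t _; ring
    rw [Finset.sum_congr rfl (fun s hs => Finset.sum_congr rfl (fun t ht => hexp s hs t ht))]
    simp only [Finset.sum_sub_distrib, Finset.sum_add_distrib]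
    rw [← Finset.sum_mul_sum, ← Finset.sum_mul_sum, ← Finset.sum_mul_sum, ← Finset.mul_sum]
    rw [← hS0, ← hS1, ← hS2]
    ring
  have hdouble : ∑ s ∈ Finset.Icc 1 d, ∑ t ∈ Finset.Icc 1 d,
      (((d:ℝ)-s) - ((d:ℝ)-t))^2 = (d:ℝ)^2*((d:ℝ)+1)*((d:ℝ)-1)/6 := by
    have hin : ∀ s : ℕ, ∑ t ∈ Finset.Icc 1 d, (((d:ℝ)-s) - ((d:ℝ)-t))^2
        = (d:ℝ)*((d:ℝ)+1)*(2*(d:ℝ)+1)/6 - (2*((d:ℝ)*((d:ℝ)+1)/2))*(s:ℝ) + (d:ℝ)*(s:ℝ)^2 := by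
      intro s
      have h : ∀ t : ℕ, (((d:ℝ)-s) - ((d:ℝ)-t))^2
          = (t:ℝ)^2 - (2*(s:ℝ))*(t:ℝ) + (s:ℝ)^2 := fun t => by ring
      rw [Finset.sum_congr rfl (fun t _ => h t)]
      simp only [Finset.sum_add_distrib, Finset.sum_sub_distrib]
      rw [sum_Icc_sq_real, ← Finset.mul_sum, sum_Icc_id_real, Finset.sum_const, card_Icc_one,
        nsmul_eq_mul]
      ring
    rw [Finset.sum_congr rfl (fun s _ => hin s)]
    simp only [Finset.sum_add_distrib, Finset.sum_sub_distrib]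
    rw [Finset.sum_const, card_Icc_one, nsmul_eq_mul, ← Finset.mul_sum, ← Finset.mul_sum,
      sum_Icc_id_real, sum_Icc_sq_real]
    ring
  have hlow : m^2 * ((d:ℝ)^2*((d:ℝ)+1)*((d:ℝ)-1)/6) ≤ 2*(S0*S2 - S1^2) := by
    rw [← hvar, ← hdouble, Finset.mul_sum]
    apply Finset.sum_le_sum
    intro s hs
    rw [Finset.mul_sum]
    apply Finset.sum_le_sum
    intro t ht
    have h1 : m ≤ limeF d ν s := le_limeF d ν hν s hs
    have h2 : m ≤ limeF d ν t := le_limeF d ν hν t ht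
    have h3 : m * m ≤ limeF d ν s * limeF d ν t :=
      mul_le_mul h1 h2 hm0.le (limeF_pos d ν s).le
    calc m^2 * ((((d:ℝ)-s) - ((d:ℝ)-t))^2) = (m*m) * ((((d:ℝ)-s) - ((d:ℝ)-t))^2) := by ring
      _ ≤ limeF d ν s * limeF d ν t * ((((d:ℝ)-s) - ((d:ℝ)-t))^2) :=
          mul_le_mul_of_nonneg_right h3 (sq_nonneg _)
  rw [cConst_rep d ν hd, ← hS0, ← hS1, ← hS2, le_div_iff₀ (by positivity)]
  nlinarith [hlow, mul_nonneg (mul_nonneg (sq_nonneg m) (sq_nonneg ((d:ℝ))))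
    (by nlinarith : (0:ℝ) ≤ (d:ℝ)^2 - 4)]
lemma fin_zero_eq_succ_iff {n : ℕ} (x : Fin n) : (0 : Fin (n+1)) = x.succ ↔ False := by
  simp [eq_comm, Fin.succ_ne_zero]

lemma ite_comm_eq {α : Type*} [DecidableEq α] (i x : α) (a b : ℝ) :
    (if i = x then a else b) = (if x = i then a else b) := by
  by_cases h : x = i
  · subst h; simp
  · rw [if_neg h, if_neg (Ne.symm h)]

lemma iteMulIte (P : Prop) [Decidable P] (a b c e : ℝ) :
    (if P then a else b) * (if P then c else e) = if P then a*c else b*e := by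
  split_ifs <;> rfl

lemma iteMulIteNe {α : Type*} [DecidableEq α] {i j : α} (h : i ≠ j) (x : α) (a b c e : ℝ) :
    (if x = i then a else b) * (if x = j then c else e)
      = if x = i then a*e else if x = j then b*c else b*e := by
  by_cases h1 : x = i
  · subst h1; rw [if_neg h, if_pos rfl, if_pos rfl]
  · rw [if_neg h1, if_neg h1]
    by_cases h2 : x = j
    · subst h2; rw [if_pos rfl, if_pos rfl]
    · rw [if_neg h2, if_neg h2]

def Mmat (d : ℕ) (ν : ℝ) : Matrix (Fin (d + 1)) (Fin (d + 1)) ℝ :=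
  Matrix.of fun i j =>
    if i = 0 ∧ j = 0 then sigma0 d ν
    else if i = 0 ∨ j = 0 then sigma1 d ν
    else if i = j then sigma2 d ν
    else sigma3 d ν

lemma diff_pos (d : ℕ) (ν : ℝ) (hd : 2 ≤ d) (hν : 0 < ν) :
    0 < alpha d ν 1 - alpha d ν 2 :=
  lt_of_lt_of_le (by positivity) (diff_ge d ν hd hν)

lemma sigma_mul_M (d : ℕ) (ν : ℝ) (hd : 2 ≤ d) (hν : 0 < ν) :
    SigmaMat d ν * Mmat d ν = cConst d ν • (1 : Matrix (Fin (d+1)) (Fin (d+1)) ℝ) := by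
  have hΔ : alpha d ν 1 - alpha d ν 2 ≠ 0 := (diff_pos d ν hd hν).ne'
  have hd1 : (d:ℝ) - 1 ≠ 0 := by
    have : (2:ℝ) ≤ (d:ℝ) := by exact_mod_cast hd
    linarith
  ext i j
  rw [Matrix.mul_apply]
  induction i using Fin.cases with
  | zero =>
    induction j using Fin.cases with
    | zero =>
      rw [Fin.sum_univ_succ]
      simp only [SigmaMat, Mmat, Matrix.of_apply, Matrix.smul_apply, Matrix.one_apply,
        Fin.succ_ne_zero, Fin.succ_inj, fin_zero_eq_succ_iff, smul_eq_mul,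
        if_true, if_false, true_and, and_true, false_and, and_false, true_or, or_true,
        false_or, or_false, Finset.sum_const, Finset.card_univ, Fintype.card_fin, nsmul_eq_mul]
      rw [sigma0, sigma1, cConst]; ring
    | succ j' =>
      rw [Fin.sum_univ_succ]
      simp only [SigmaMat, Mmat, Matrix.of_apply, Matrix.smul_apply, Matrix.one_apply,
        Fin.succ_ne_zero, Fin.succ_inj, fin_zero_eq_succ_iff, smul_eq_mul, mul_ite,
        if_true, if_false, true_and, and_true, false_and, and_false, true_or, or_true,
        false_or, or_false]
      rw [sum_ite_one j' (alpha d ν 1 * sigma2 d ν) (alpha d ν 1 * sigma3 d ν)]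
      rw [sigma1, sigma2, sigma3]
      field_simp
      ring
  | succ i' =>
    induction j using Fin.cases with
    | zero =>
      rw [Fin.sum_univ_succ]
      simp only [SigmaMat, Mmat, Matrix.of_apply, Matrix.smul_apply, Matrix.one_apply,
        Fin.succ_ne_zero, Fin.succ_inj, fin_zero_eq_succ_iff, smul_eq_mul, ite_mul,
        if_true, if_false, true_and, and_true, false_and, and_false, true_or, or_true,
        false_or, or_false]
      simp only [ite_comm_eq i']
      rw [sum_ite_one i' (alpha d ν 1 * sigma1 d ν) (alpha d ν 2 * sigma1 d ν)]
      rw [sigma0, sigma1]; ring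
    | succ j' =>
      rw [Fin.sum_univ_succ]
      simp only [SigmaMat, Mmat, Matrix.of_apply, Matrix.smul_apply, Matrix.one_apply,
        Fin.succ_ne_zero, Fin.succ_inj, fin_zero_eq_succ_iff, smul_eq_mul,
        if_true, if_false, true_and, and_true, false_and, and_false, true_or, or_true,
        false_or, or_false]
      simp only [ite_comm_eq i']
      by_cases hij : i' = j'
      · subst hij
        simp only [iteMulIte]
        rw [sum_ite_one i' (alpha d ν 1 * sigma2 d ν) (alpha d ν 2 * sigma3 d ν)]
        rw [if_pos trivial, sigma1, sigma2, sigma3, cConst]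
        field_simp
        ring
      · simp only [fun x => iteMulIteNe hij x (alpha d ν 1) (alpha d ν 2)
          (sigma2 d ν) (sigma3 d ν)]
        rw [sum_ite_two i' j' hij]
        rw [if_neg (Ne.symm hij), sigma1, sigma2, sigma3]
        field_simp
        ring
lemma opNorm_le_frob {n : ℕ} (A : Matrix (Fin n) (Fin n) ℝ) :
    opNorm A ≤ Real.sqrt (∑ i, ∑ j, (A i j)^2) := by
  rw [opNorm]
  apply ContinuousLinearMap.opNorm_le_bound _ (Real.sqrt_nonneg _)
  intro v
  have hco : ∀ i, (Matrix.toEuclideanCLM (𝕜 := ℝ) A v) i = ∑ j, A i j * v j := by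
    intro i
    have h := congrFun (Matrix.ofLp_toEuclideanCLM (𝕜 := ℝ) A v) i
    simpa [Matrix.toLin'_apply, Matrix.mulVec, dotProduct]
      using h
  rw [EuclideanSpace.norm_eq, EuclideanSpace.norm_eq]
  have hb : ∑ i, ‖(Matrix.toEuclideanCLM (𝕜 := ℝ) A v) i‖^2
      ≤ (∑ i, ∑ j, (A i j)^2) * (∑ j, ‖v j‖^2) := by
    rw [Finset.sum_mul]
    apply Finset.sum_le_sum
    intro i _
    rw [hco i, Real.norm_eq_abs, sq_abs]
    calc (∑ j, A i j * v j)^2 ≤ (∑ j, (A i j)^2) * (∑ j, (v j)^2) :=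
          Finset.sum_mul_sq_le_sq_mul_sq _ _ _
      _ = (∑ j, (A i j)^2) * (∑ j, ‖v j‖^2) := by simp [Real.norm_eq_abs, sq_abs]
  calc Real.sqrt (∑ i, ‖(Matrix.toEuclideanCLM (𝕜 := ℝ) A v) i‖^2)
      ≤ Real.sqrt ((∑ i, ∑ j, (A i j)^2) * (∑ j, ‖v j‖^2)) := Real.sqrt_le_sqrt hb
    _ = Real.sqrt (∑ i, ∑ j, (A i j)^2) * Real.sqrt (∑ j, ‖v j‖^2) :=
        Real.sqrt_mul (by positivity) _
set_option maxHeartbeats 2000000 in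
lemma frob_M (d : ℕ) (ν : ℝ) :
    ∑ i, ∑ j, (Mmat d ν i j)^2
      = (sigma0 d ν)^2 + 2*(d:ℝ)*(sigma1 d ν)^2 + (d:ℝ)*(sigma2 d ν)^2
        + (d:ℝ)*((d:ℝ)-1)*(sigma3 d ν)^2 := by
  have h0 : ∑ j : Fin (d+1), (Mmat d ν 0 j)^2
      = (sigma0 d ν)^2 + (d:ℝ)*(sigma1 d ν)^2 := by
    rw [Fin.sum_univ_succ]
    simp only [Mmat, Matrix.of_apply, Fin.succ_ne_zero, fin_zero_eq_succ_iff,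
      if_true, if_false, true_and, and_true, false_and, and_false, true_or, or_true,
      false_or, or_false, Finset.sum_const, Finset.card_univ, Fintype.card_fin, nsmul_eq_mul]
  have hsuc : ∀ i' : Fin d, ∑ j : Fin (d+1), (Mmat d ν i'.succ j)^2
      = (sigma1 d ν)^2 + ((sigma2 d ν)^2 + ((d:ℝ)-1)*(sigma3 d ν)^2) := by
    intro i'
    rw [Fin.sum_univ_succ]
    simp only [Mmat, Matrix.of_apply, Fin.succ_ne_zero, fin_zero_eq_succ_iff, Fin.succ_inj,
      if_true, if_false, true_and, and_true, false_and, and_false, true_or, or_true,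
      false_or, or_false]
    simp only [ite_comm_eq i', apply_ite (fun x : ℝ => x^2)]
    rw [sum_ite_one i' ((sigma2 d ν)^2) ((sigma3 d ν)^2)]
  rw [Fin.sum_univ_succ, h0, Finset.sum_congr rfl (fun i _ => hsuc i), Finset.sum_const,
    Finset.card_univ, Fintype.card_fin, nsmul_eq_mul]
  ring

set_option maxHeartbeats 2000000 in
/-- Σ is invertible and ‖Σ⁻¹‖_op ≤ 70·d^{3/2}·exp(5/(2ν²)). -/
theorem opNorm_SigmaMat_inv_le (d : ℕ) (hd : 2 ≤ d) (ν : ℝ) (hν : 0 < ν) :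
    IsUnit (SigmaMat d ν)
      ∧ opNorm (SigmaMat d ν)⁻¹ ≤ 70 * (d : ℝ) ^ ((3 : ℝ) / 2) * Real.exp (5 / (2 * ν ^ 2)) := by
  have hc : 0 < cConst d ν := lt_of_lt_of_le (by positivity) (cConst_ge d ν hd hν)
  have hmul : SigmaMat d ν * ((cConst d ν)⁻¹ • Mmat d ν) = 1 := by
    rw [Matrix.mul_smul, sigma_mul_M d ν hd hν, smul_smul, inv_mul_cancel₀ hc.ne', one_smul]
  have hunit : IsUnit (SigmaMat d ν) := by
    have hdet : IsUnit (SigmaMat d ν).det := by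
      apply IsUnit.of_mul_eq_one ((cConst d ν)⁻¹ • Mmat d ν).det
      rw [← Matrix.det_mul, hmul, Matrix.det_one]
    exact (Matrix.isUnit_iff_isUnit_det _).mpr hdet
  refine ⟨hunit, ?_⟩
  have hinv : (SigmaMat d ν)⁻¹ = (cConst d ν)⁻¹ • Mmat d ν := Matrix.inv_eq_right_inv hmul
  set m := Real.exp (-(1/(2*ν^2))) with hm
  have hm0 : 0 < m := Real.exp_pos _
  set E := m⁻¹ with hE
  have hE0 : 0 < E := by positivity
  have hE1 : 1 ≤ E := by
    rw [hE, hm, ← Real.exp_neg, neg_neg]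
    exact Real.one_le_exp (by positivity)
  have hd2 : (2:ℝ) ≤ (d:ℝ) := by exact_mod_cast hd
  have hd0 : (0:ℝ) < (d:ℝ) := by linarith
  have hA := alpha_nonneg d ν hd hν 0 (by norm_num)
  have hA1 := alpha_le_one d ν hd hν 0 (by norm_num)
  have hB := alpha_nonneg d ν hd hν 1 (by norm_num)
  have hB1 := alpha_le_one d ν hd hν 1 (by norm_num)
  have hC := alpha_nonneg d ν hd hν 2 (by norm_num)
  have hC1 := alpha_le_one d ν hd hν 2 (by norm_num)
  have hΔ : m/6 ≤ alpha d ν 1 - alpha d ν 2 := diff_ge d ν hd hν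
  have hΔ0 : 0 < alpha d ν 1 - alpha d ν 2 := diff_pos d ν hd hν
  have hAC : 0 ≤ alpha d ν 0 * alpha d ν 2 := mul_nonneg hA hC
  have hAC1 : alpha d ν 0 * alpha d ν 2 ≤ 1 := mul_le_one₀ hA1 hC hC1
  have hAB : 0 ≤ alpha d ν 0 * alpha d ν 1 := mul_nonneg hA hB
  have hAB1 : alpha d ν 0 * alpha d ν 1 ≤ 1 := mul_le_one₀ hA1 hB hB1
  have hB2 : (alpha d ν 1)^2 ≤ 1 := by nlinarith
  have hB2' : 0 ≤ (alpha d ν 1)^2 := sq_nonneg _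
  have hs0 : (sigma0 d ν)^2 ≤ (d:ℝ)^2 := by
    rw [sigma0]
    have e1 : 0 ≤ ((d:ℝ)-1)*alpha d ν 2 + alpha d ν 1 := by
      nlinarith [mul_nonneg (show (0:ℝ) ≤ (d:ℝ)-1 by linarith) hC]
    have e2 : ((d:ℝ)-1)*alpha d ν 2 + alpha d ν 1 ≤ (d:ℝ) := by
      nlinarith [mul_nonneg (show (0:ℝ) ≤ (d:ℝ)-1 by linarith)
        (show (0:ℝ) ≤ 1 - alpha d ν 2 by linarith)]
    nlinarith [e1, e2]
  have hs1 : (sigma1 d ν)^2 ≤ 1 := by rw [sigma1]; nlinarith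
  have hΔsq : (m/6)^2 ≤ (alpha d ν 1 - alpha d ν 2)^2 := pow_le_pow_left₀ (by positivity) hΔ 2
  have hfold : ((d:ℝ)-1)^2 / ((m/6)^2) = 36*((d:ℝ)-1)^2*E^2 := by
    rw [hE]; field_simp; try ring
  have hs2 : (sigma2 d ν)^2 ≤ 36*((d:ℝ)-1)^2*E^2 := by
    rw [sigma2, div_pow]
    have hnum : (((d:ℝ) - 2) * alpha d ν 0 * alpha d ν 2 - ((d:ℝ) - 1) * (alpha d ν 1) ^ 2
        + alpha d ν 0 * alpha d ν 1)^2 ≤ ((d:ℝ)-1)^2 := by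
      have hu : ((d:ℝ) - 2) * alpha d ν 0 * alpha d ν 2 - ((d:ℝ) - 1) * (alpha d ν 1) ^ 2
          + alpha d ν 0 * alpha d ν 1 ≤ (d:ℝ)-1 := by
        nlinarith [mul_nonneg (show (0:ℝ) ≤ (d:ℝ)-2 by linarith)
          (show (0:ℝ) ≤ 1 - alpha d ν 0 * alpha d ν 2 by linarith),
          mul_nonneg (show (0:ℝ) ≤ (d:ℝ)-1 by linarith) hB2']
      have hl : -((d:ℝ)-1) ≤ ((d:ℝ) - 2) * alpha d ν 0 * alpha d ν 2
          - ((d:ℝ) - 1) * (alpha d ν 1) ^ 2 + alpha d ν 0 * alpha d ν 1 := by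
        nlinarith [mul_nonneg (show (0:ℝ) ≤ (d:ℝ)-2 by linarith) hAC,
          mul_nonneg (show (0:ℝ) ≤ (d:ℝ)-1 by linarith)
            (show (0:ℝ) ≤ 1 - (alpha d ν 1)^2 by linarith)]
      nlinarith
    calc _ ≤ ((d:ℝ)-1)^2 / ((m/6)^2) := div_le_div₀ (by positivity) hnum (by positivity) hΔsq
      _ = 36*((d:ℝ)-1)^2*E^2 := hfold
  have hs3 : (sigma3 d ν)^2 ≤ 36*E^2 := by
    rw [sigma3, div_pow]
    have hnum : ((alpha d ν 1) ^ 2 - alpha d ν 0 * alpha d ν 2)^2 ≤ 1 := by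
      nlinarith [hB2, hAC1, hB2', hAC]
    calc _ ≤ 1 / ((m/6)^2) := div_le_div₀ (by positivity) hnum (by positivity) hΔsq
      _ = 36*E^2 := by rw [hE]; field_simp; try ring
  have hE2 : 1 ≤ E^2 := one_le_pow₀ hE1
  have hS : ∑ i, ∑ j, (Mmat d ν i j)^2 ≤ 55*(d:ℝ)^3*E^2 := by
    rw [frob_M]
    have h2' : (d:ℝ)*(sigma2 d ν)^2 ≤ (d:ℝ)*(36*((d:ℝ)-1)^2*E^2) :=
      mul_le_mul_of_nonneg_left hs2 hd0.le
    have h3' : (d:ℝ)*((d:ℝ)-1)*(sigma3 d ν)^2 ≤ (d:ℝ)*((d:ℝ)-1)*(36*E^2) :=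
      mul_le_mul_of_nonneg_left hs3 (by nlinarith)
    have h1' : 2*(d:ℝ)*(sigma1 d ν)^2 ≤ 2*(d:ℝ) := by nlinarith
    have hprod : 0 ≤ (19*(d:ℝ)^3 + 36*(d:ℝ)^2) * (E^2 - 1) :=
      mul_nonneg (by nlinarith) (by linarith)
    nlinarith [hprod]
  have hinvF : ∑ i, ∑ j, ((SigmaMat d ν)⁻¹ i j)^2
      = ((cConst d ν)⁻¹)^2 * ∑ i, ∑ j, (Mmat d ν i j)^2 := by
    rw [hinv]
    simp only [Matrix.smul_apply, smul_eq_mul, mul_pow, ← Finset.mul_sum]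
  have hcge : m^2*(d:ℝ)/16 ≤ cConst d ν := cConst_ge d ν hd hν
  have hcinv : (cConst d ν)⁻¹ ≤ 16*E^2/(d:ℝ) := by
    calc (cConst d ν)⁻¹ ≤ (m^2*(d:ℝ)/16)⁻¹ := inv_anti₀ (by positivity) hcge
      _ = 16*E^2/(d:ℝ) := by rw [hE]; field_simp; try ring
  have hkey : ∑ i, ∑ j, ((SigmaMat d ν)⁻¹ i j)^2 ≤ (119*Real.sqrt d*E^3)^2 := by
    rw [hinvF]
    have h1 : ((cConst d ν)⁻¹)^2 ≤ (16*E^2/(d:ℝ))^2 :=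
      pow_le_pow_left₀ (by positivity) hcinv 2
    calc ((cConst d ν)⁻¹)^2 * ∑ i, ∑ j, (Mmat d ν i j)^2
        ≤ (16*E^2/(d:ℝ))^2 * (55*(d:ℝ)^3*E^2) := by
          apply mul_le_mul h1 hS ?_ (by positivity)
          · apply Finset.sum_nonneg; intro i _; apply Finset.sum_nonneg; intro j _
            exact sq_nonneg _
      _ = 14080*(d:ℝ)*E^6 := by field_simp; ring
      _ ≤ (119*Real.sqrt d*E^3)^2 := by
          rw [mul_pow, mul_pow, Real.sq_sqrt hd0.le]
          nlinarith [pow_nonneg hE0.le 6, hd0]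
  have hfin : opNorm (SigmaMat d ν)⁻¹ ≤ 119*Real.sqrt d*E^3 := by
    calc opNorm (SigmaMat d ν)⁻¹ ≤ Real.sqrt (∑ i, ∑ j, ((SigmaMat d ν)⁻¹ i j)^2) :=
          opNorm_le_frob _
      _ ≤ Real.sqrt ((119*Real.sqrt d*E^3)^2) := Real.sqrt_le_sqrt hkey
      _ = 119*Real.sqrt d*E^3 := Real.sqrt_sq (by positivity)
  have hexp5 : Real.exp (5/(2*ν^2)) = E^5 := by
    rw [hE, hm, ← Real.exp_neg, neg_neg, ← Real.exp_nat_mul]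
    norm_num
    ring
  have hrpow : (d:ℝ)^((3:ℝ)/2) = (d:ℝ)*Real.sqrt d := by
    rw [show (3:ℝ)/2 = 1 + 1/2 by norm_num, Real.rpow_add hd0, Real.rpow_one,
      Real.sqrt_eq_rpow]
  rw [hexp5, hrpow]
  have hE35 : E^3 ≤ E^5 := pow_le_pow_right₀ hE1 (by norm_num)
  have hsd : 0 ≤ Real.sqrt d := Real.sqrt_nonneg _
  calc opNorm (SigmaMat d ν)⁻¹ ≤ 119*Real.sqrt d*E^3 := hfin
    _ ≤ 119*Real.sqrt d*E^5 := by
        apply mul_le_mul_of_nonneg_left hE35 (by positivity)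
    _ = 119*(Real.sqrt d*E^5) := by ring
    _ ≤ (70*(d:ℝ))*(Real.sqrt d*E^5) :=
        mul_le_mul_of_nonneg_right (by linarith) (by positivity)
    _ = 70*((d:ℝ)*Real.sqrt d)*E^5 := by ring
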